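/- arXiv:1607.07313 — 2 statements merged into one kernel-verified Lean document; each statement's English description precedes it below -/
import Mathlib

section
/- Let p ≥ 3 be odd and suppose the cycle C_m (m ≥ 3) has an edge-magic labeling f. If m is odd or m ≥ p, then the cycle C_{pm} has an edge-magic labeling with valence p·val(f) − 3(p−1)/2. -/
open Finset

/-- Sum of the labels of the two endpoints of an (undirected) edge. -/
def edgeSum (g : ℤ → ℤ) : Sym2 ℤ → ℤ :=
  Sym2.lift ⟨fun u v => g u + g v, fun _ _ => add_comm _ _⟩

/-- `(fv, fe)` is an edge-magic labeling with valence `k` of the graph with vertex set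
`Vs ⊆ ℤ` and edge set `E`: the labels form a bijection from `V ∪ E` onto
`[1, |V| + |E|]` and every edge `uv` satisfies `fv u + fe uv + fv v = k`. -/
def IsEdgeMagicG (Vs : Finset ℤ) (E : Finset (Sym2 ℤ))
    (fv : ℤ → ℤ) (fe : Sym2 ℤ → ℤ) (k : ℤ) : Prop :=
  Vs.image fv ∪ E.image fe = Finset.Icc 1 ((Vs.card : ℤ) + (E.card : ℤ)) ∧
  ∀ u v : ℤ, s(u, v) ∈ E → fv u + fe s(u, v) + fv v = k

/-- The edge set of the cycle `C_n` on the vertex set `[1,n] ⊆ ℤ`. -/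
noncomputable def cycleEdges (n : ℕ) : Finset (Sym2 ℤ) :=
  (Finset.Icc (1 : ℤ) (n : ℤ)).image fun i => s(i, if i = (n : ℤ) then 1 else i + 1)

namespace S17

set_option linter.unusedSectionVars false

lemma modeq_small {P d : ℤ} (hP : 0 < P) (hd : P ∣ d) (h1 : -P < d) (h2 : d < P) : d = 0 := by
  obtain ⟨k, rfl⟩ := hd
  rcases lt_trichotomy k 0 with h | h | h
  · nlinarith
  · simp [h]
  · nlinarith

lemma split_eq {P a a' h h' : ℤ} (hP : 0 < P) (ha : 1 ≤ h) (hb : h ≤ P)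
    (ha' : 1 ≤ h') (hb' : h' ≤ P) (heq : P * (a - 1) + h = P * (a' - 1) + h') :
    a = a' ∧ h = h' := by
  have hd : P * (a - a') = h' - h := by ring_nf; ring_nf at heq; linarith
  have : a - a' = 0 := by
    rcases lt_trichotomy a a' with h | h | h
    · nlinarith
    · omega
    · nlinarith
  constructor
  · omega
  · nlinarith

def wm (t P x : ℤ) : ℤ := ((t + 1) * x) % P

def gm (t P x : ℤ) : ℤ := wm t P x + 1

def Fm (t P x : ℤ) : ℤ := gm t P x + gm t P (x + 1)

section core
variable {t P : ℤ} (ht : 1 ≤ t) (hP : P = 2 * t + 1)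
include ht hP

lemma wm_nonneg (x : ℤ) : 0 ≤ wm t P x := Int.emod_nonneg _ (by omega)

lemma wm_lt (x : ℤ) : wm t P x < P := Int.emod_lt_of_pos _ (by omega)

omit ht hP in
lemma wm_congr {x y : ℤ} (h : x ≡ y [ZMOD P]) : wm t P x = wm t P y :=
  Int.ModEq.mul_left (t + 1) h

omit ht hP in
lemma gm_congr {x y : ℤ} (h : x ≡ y [ZMOD P]) : gm t P x = gm t P y := by
  unfold gm; rw [wm_congr h]

lemma wm_inj {x y : ℤ} (h : wm t P x = wm t P y) : x ≡ y [ZMOD P] := by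
  have h1 : (t + 1) * x ≡ (t + 1) * y [ZMOD P] := h
  have h2 : 2 * ((t + 1) * x) ≡ 2 * ((t + 1) * y) [ZMOD P] := h1.mul_left 2
  have hx : x ≡ 2 * ((t + 1) * x) [ZMOD P] :=
    Int.modEq_iff_dvd.mpr ⟨x, by rw [hP]; ring⟩
  have hy : y ≡ 2 * ((t + 1) * y) [ZMOD P] :=
    Int.modEq_iff_dvd.mpr ⟨y, by rw [hP]; ring⟩
  exact (hx.trans h2).trans hy.symm

lemma gm_bounds (x : ℤ) : 1 ≤ gm t P x ∧ gm t P x ≤ P := by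
  have := wm_nonneg ht hP x
  have := wm_lt ht hP x
  unfold gm; omega

lemma wm_succ (x : ℤ) :
    wm t P (x + 1) = if wm t P x < t then wm t P x + (t + 1) else wm t P x + (t + 1) - P := by
  have h0 := wm_nonneg ht hP x
  have h1 := wm_lt ht hP x
  have key : wm t P (x + 1) = (wm t P x + (t + 1)) % P := by
    unfold wm
    rw [mul_add, mul_one, Int.add_emod,
      Int.emod_eq_of_lt (by omega) (by omega : (t:ℤ) + 1 < P)]
  rw [key]
  split_ifs with h
  · exact Int.emod_eq_of_lt (by omega) (by omega)
  · have h2 : (wm t P x + (t + 1) - P + P * 1) % P = (wm t P x + (t + 1) - P) % P :=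
      by simp
    conv_lhs => rw [show wm t P x + (t + 1) = wm t P x + (t + 1) - P + P * 1 by ring]
    rw [h2]
    have b1 : 0 ≤ wm t P x + (t + 1) - P := by omega
    have b2 : wm t P x + (t + 1) - P < P := by omega
    exact Int.emod_eq_of_lt b1 b2

lemma Fm_range (x : ℤ) : t + 2 ≤ Fm t P x ∧ Fm t P x ≤ 3 * t + 2 := by
  have h0 := wm_nonneg ht hP x
  have h1 := wm_lt ht hP x
  have h2 := wm_succ ht hP x
  unfold Fm gm
  rw [h2]; split_ifs <;> omega

lemma Fm_inj {x y : ℤ} (h : Fm t P x = Fm t P y) : x ≡ y [ZMOD P] := by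
  apply wm_inj ht hP
  have h0 := wm_nonneg ht hP x
  have h1 := wm_lt ht hP x
  have h0' := wm_nonneg ht hP y
  have h1' := wm_lt ht hP y
  unfold Fm gm at h
  rw [wm_succ ht hP x, wm_succ ht hP y] at h
  split_ifs at h <;> omega

end core

/-- the zig-zag height function -/
def Aq (q j : ℕ) : ℤ := if j ≤ q then (j : ℤ) else 2 * (q : ℤ) - (j : ℤ)

/-- choice of the turning point -/
def qch (p m : ℕ) : ℕ := if Odd m then (m + 1) / 2 else if m = p + 1 then m else (m + p + 1) / 2

lemma Aq_zero (q : ℕ) : Aq q 0 = 0 := by simp [Aq]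

lemma Aq_succ (q j : ℕ) : Aq q (j + 1) = Aq q j + 1 ∨ Aq q (j + 1) = Aq q j - 1 := by
  unfold Aq
  split_ifs <;> [left; left; right; right] <;> push_cast <;> omega

lemma Aq_wrap {p m : ℕ} (hp3 : 3 ≤ p) (hpodd : Odd p) (hm3 : 3 ≤ m)
    (hcond : Odd m ∨ p ≤ m) :
    Aq (qch p m) (m - 1) ≡ 0 [ZMOD (p : ℤ)] ∨ Aq (qch p m) (m - 1) ≡ 2 [ZMOD (p : ℤ)] := by
  obtain ⟨c, hc⟩ := hpodd
  by_cases hm : Odd m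
  · right
    obtain ⟨k, hk⟩ := id hm
    have h2 : Aq (qch p m) (m - 1) = 2 := by
      unfold Aq qch
      rw [if_pos hm]
      split_ifs <;> omega
    rw [h2]
  · have hme : m % 2 = 0 := Nat.even_iff.mp (Nat.not_odd_iff_even.mp hm)
    have hpm : p + 1 ≤ m := by
      rcases hcond with h | h
      · exact absurd h hm
      · rcases Nat.eq_or_lt_of_le h with h' | h'
        · exfalso; apply hm; rw [← h']; exact ⟨c, hc⟩
        · omega
    by_cases h1 : m = p + 1
    · left
      have : Aq (qch p m) (m - 1) = (p : ℤ) := by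
        unfold Aq qch
        rw [if_neg hm, if_pos h1]
        split_ifs <;> omega
      rw [this]
      exact (Int.modEq_iff_dvd.mpr ⟨-1, by ring⟩)
    · right
      have hm4 : p + 3 ≤ m := by omega
      have : Aq (qch p m) (m - 1) = (p : ℤ) + 2 := by
        unfold Aq qch
        rw [if_neg hm, if_neg h1]
        split_ifs <;> omega
      rw [this]
      exact (Int.modEq_iff_dvd.mpr ⟨-1, by ring⟩)

/-- the per-copy shift label -/
def um (t P : ℤ) (q m i : ℕ) : ℤ := gm t P (Aq q (i % m) + (i / m : ℕ))

def em (t P : ℤ) (q m i : ℕ) : ℤ := 3 * (t + 1) - um t P q m i - um t P q m (i + 1)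

lemma succ_mod_div {m : ℕ} (hm : 0 < m) (j : ℕ) :
    ((j + 1) % m = j % m + 1 ∧ (j + 1) / m = j / m) ∨
      (j % m = m - 1 ∧ (j + 1) % m = 0 ∧ (j + 1) / m = j / m + 1) := by
  have hd := Nat.div_add_mod j m
  have hr : j % m < m := Nat.mod_lt _ hm
  by_cases h : j % m + 1 < m
  · left
    have h1 : j + 1 = m * (j / m) + (j % m + 1) := by omega
    constructor
    · rw [h1, Nat.mul_add_mod]
      exact Nat.mod_eq_of_lt h
    · rw [h1, Nat.mul_add_div hm, Nat.div_eq_of_lt h, Nat.add_zero]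
  · right
    have hr1 : j % m = m - 1 := by omega
    have h1 : j + 1 = m * (j / m + 1) := by
      have hx : m * (j / m + 1) = m * (j / m) + m := by ring
      omega
    refine ⟨hr1, ?_, ?_⟩
    · rw [h1, Nat.mul_mod_right]
    · rw [h1, Nat.mul_div_cancel_left _ hm]

section main
variable {t P : ℤ} {p m : ℕ} (ht : 1 ≤ t) (hP : P = 2 * t + 1)
  (hp3 : 3 ≤ p) (hpodd : Odd p) (hm3 : 3 ≤ m) (hcond : Odd m ∨ p ≤ m)
  (hPp : P = (p : ℤ))
include ht hP hp3 hpodd hm3 hcond hPp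

/-- key structural fact: for each residue `r`, the consecutive-sum is an `Fm` value. -/
lemma pair_form : ∀ r < m, ∃ c : ℤ, ∀ i : ℕ, i % m = r →
    um t P (qch p m) m i + um t P (qch p m) m (i + 1) = Fm t P (c + (i / m : ℕ)) := by
  intro r hr
  set q := qch p m with hq
  by_cases hlast : r = m - 1
  · rcases Aq_wrap hp3 hpodd hm3 hcond with hw | hw <;> rw [← hPp] at hw
    · refine ⟨0, fun i hi => ?_⟩
      rcases succ_mod_div (by omega : 0 < m) i with ⟨h1, h2⟩ | ⟨h1, h2, h3⟩
      · exfalso; have := Nat.mod_lt (i + 1) (show 0 < m by omega); omega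
      · unfold um Fm
        rw [hi, hlast, h2, h3, Aq_zero]
        have e1 : gm t P (Aq q (m - 1) + (i / m : ℕ)) = gm t P (0 + (i / m : ℕ)) :=
          gm_congr (Int.ModEq.add_right _ hw)
        have e2 : (0 : ℤ) + ((i / m + 1 : ℕ) : ℤ) = 0 + ((i / m : ℕ) : ℤ) + 1 := by
          push_cast; ring
        rw [e1, e2]
    · refine ⟨1, fun i hi => ?_⟩
      rcases succ_mod_div (by omega : 0 < m) i with ⟨h1, h2⟩ | ⟨h1, h2, h3⟩
      · exfalso; have := Nat.mod_lt (i + 1) (show 0 < m by omega); omega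
      · unfold um Fm
        rw [hi, hlast, h2, h3, Aq_zero]
        have e1 : gm t P (Aq q (m - 1) + (i / m : ℕ)) = gm t P (1 + ((i / m : ℕ) : ℤ) + 1) :=
          gm_congr (by
            calc Aq q (m - 1) + ((i / m : ℕ) : ℤ)
                ≡ 2 + (i / m : ℕ) [ZMOD P] := Int.ModEq.add_right _ hw
              _ = 1 + ((i / m : ℕ) : ℤ) + 1 := by ring)
        have e2 : (0 : ℤ) + ((i / m + 1 : ℕ) : ℤ) = 1 + ((i / m : ℕ) : ℤ) := by
          push_cast; ring
        rw [e1, e2]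
        exact add_comm _ _
  · rcases Aq_succ q r with hs | hs
    · refine ⟨Aq q r, fun i hi => ?_⟩
      rcases succ_mod_div (by omega : 0 < m) i with ⟨h1, h2⟩ | ⟨h1, h2, h3⟩
      · unfold um Fm
        rw [hi, h1, h2, hi, hs]
        rw [show Aq q r + 1 + ((i / m : ℕ) : ℤ) = Aq q r + ((i / m : ℕ) : ℤ) + 1 from by ring]
      · exfalso; omega
    · refine ⟨Aq q (r + 1), fun i hi => ?_⟩
      rcases succ_mod_div (by omega : 0 < m) i with ⟨h1, h2⟩ | ⟨h1, h2, h3⟩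
      · unfold um Fm
        rw [hi, h1, h2, hi, hs]
        rw [show Aq q r + ((i / m : ℕ) : ℤ) = Aq q r - 1 + ((i / m : ℕ) : ℤ) + 1 from by ring]
        exact add_comm _ _
      · exfalso; omega

omit hp3 hpodd hm3 hcond hPp in
lemma um_bounds (q : ℕ) (i : ℕ) : 1 ≤ um t P q m i ∧ um t P q m i ≤ P :=
  gm_bounds ht hP _

lemma em_bounds (i : ℕ) : 1 ≤ em t P (qch p m) m i ∧ em t P (qch p m) m i ≤ P := by
  have hr : i % m < m := Nat.mod_lt _ (by omega)
  obtain ⟨c, hc⟩ := pair_form ht hP hp3 hpodd hm3 hcond hPp (i % m) hr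
  have h1 := hc i rfl
  have h2 := Fm_range ht hP (c + (i / m : ℕ))
  unfold em
  omega

lemma nat_eq_of_cast_modeq {a b : ℕ} (hab : (a : ℤ) ≡ (b : ℤ) [ZMOD P])
    (ha : a < p) (hb : b < p) : a = b := by
  have hd : P ∣ (b : ℤ) - a := Int.ModEq.dvd hab
  have h0 : (b : ℤ) - a = 0 := by
    apply modeq_small (by omega) hd
    · have : (b : ℤ) < p := by exact_mod_cast hb
      omega
    · have : (a : ℤ) < p := by exact_mod_cast ha
      omega
  omega

lemma um_inj {i i' : ℕ} (hi : i < p * m) (hi' : i' < p * m) (hmod : i % m = i' % m)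
    (h : um t P (qch p m) m i = um t P (qch p m) m i') : i = i' := by
  have hw : wm t P (Aq (qch p m) (i % m) + (i / m : ℕ))
      = wm t P (Aq (qch p m) (i' % m) + (i' / m : ℕ)) := by
    unfold um gm at h; omega
  rw [← hmod] at hw
  have hmeq := Int.ModEq.add_left_cancel' _ (wm_inj ht hP hw)
  have hs : i / m = i' / m := by
    apply nat_eq_of_cast_modeq ht hP hp3 hpodd hm3 hcond hPp hmeq
    · exact (Nat.div_lt_iff_lt_mul (by omega)).mpr hi
    · exact (Nat.div_lt_iff_lt_mul (by omega)).mpr hi'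
  calc i = m * (i / m) + i % m := (Nat.div_add_mod i m).symm
    _ = m * (i' / m) + i' % m := by rw [hs, hmod]
    _ = i' := Nat.div_add_mod i' m

lemma em_inj {i i' : ℕ} (hi : i < p * m) (hi' : i' < p * m) (hmod : i % m = i' % m)
    (h : em t P (qch p m) m i = em t P (qch p m) m i') : i = i' := by
  have hr : i % m < m := Nat.mod_lt _ (by omega)
  obtain ⟨c, hc⟩ := pair_form ht hP hp3 hpodd hm3 hcond hPp (i % m) hr
  have h1 := hc i rfl
  have h2 := hc i' hmod.symm
  have hF : Fm t P (c + (i / m : ℕ)) = Fm t P (c + (i' / m : ℕ)) := by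
    unfold em at h; omega
  have hmeq := Int.ModEq.add_left_cancel' c (Fm_inj ht hP hF)
  have hs : i / m = i' / m := by
    apply nat_eq_of_cast_modeq ht hP hp3 hpodd hm3 hcond hPp hmeq
    · exact (Nat.div_lt_iff_lt_mul (by omega)).mpr hi
    · exact (Nat.div_lt_iff_lt_mul (by omega)).mpr hi'
  calc i = m * (i / m) + i % m := (Nat.div_add_mod i m).symm
    _ = m * (i' / m) + i' % m := by rw [hs, hmod]
    _ = i' := Nat.div_add_mod i' m

end main

lemma cycle_injOn {N : ℕ} (hN : 3 ≤ N) :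
    Set.InjOn (fun i : ℤ => s(i, if i = (N : ℤ) then 1 else i + 1))
      ((Finset.Icc (1 : ℤ) (N : ℤ)) : Set ℤ) := by
  intro a ha b hb h
  simp only [coe_Icc, Set.mem_Icc] at ha hb
  simp only [Sym2.eq_iff] at h
  split_ifs at h <;> omega

lemma cycleEdges_card {N : ℕ} (hN : 3 ≤ N) : (cycleEdges N).card = N := by
  unfold cycleEdges
  rw [Finset.card_image_of_injOn (cycle_injOn hN), Int.card_Icc]
  omega

def bV (m i : ℕ) : ℤ := ((i % m : ℕ) : ℤ) + 1

def bE (m i : ℕ) : Sym2 ℤ := s(bV m i, if bV m i = (m : ℤ) then 1 else bV m i + 1)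

def BV (t P : ℤ) (q m : ℕ) (fv : ℤ → ℤ) (i : ℕ) : ℤ := P * (fv (bV m i) - 1) + um t P q m i

def BE (t P : ℤ) (q m : ℕ) (fe : Sym2 ℤ → ℤ) (i : ℕ) : ℤ := P * (fe (bE m i) - 1) + em t P q m i

def Gv (t P : ℤ) (q m : ℕ) (fv : ℤ → ℤ) : ℤ → ℤ := fun x => BV t P q m fv (x - 1).toNat

def Ge (t P : ℤ) (q m N : ℕ) (fe : Sym2 ℤ → ℤ) : Sym2 ℤ → ℤ :=
  Sym2.lift ⟨fun a b => BE t P q m fe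
      (if (a = 1 ∧ b = (N : ℤ)) ∨ (b = 1 ∧ a = (N : ℤ)) then N - 1 else (min a b - 1).toNat),
    fun a b => by simp only []; rw [min_comm a b]; congr 1; exact if_congr or_comm rfl rfl⟩

lemma bV_mem {m : ℕ} (hm : 0 < m) (i : ℕ) : 1 ≤ bV m i ∧ bV m i ≤ (m : ℤ) := by
  have := Nat.mod_lt i hm
  unfold bV
  omega

lemma bV_succ {m : ℕ} (hm : 0 < m) (i : ℕ) :
    bV m (i + 1) = if bV m i = (m : ℤ) then 1 else bV m i + 1 := by
  have hlt := Nat.mod_lt i hm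
  rcases succ_mod_div hm i with ⟨h1, h2⟩ | ⟨h1, h2, h3⟩
  · have hlt2 := Nat.mod_lt (i + 1) hm
    rw [if_neg (by unfold bV; omega)]
    unfold bV
    omega
  · rw [if_pos (by unfold bV; omega)]
    unfold bV
    omega

lemma bE_mem {m : ℕ} (hm : 0 < m) (i : ℕ) : bE m i ∈ cycleEdges m := by
  unfold cycleEdges
  exact Finset.mem_image.mpr ⟨bV m i, Finset.mem_Icc.mpr (bV_mem hm i), rfl⟩

section graph
variable {t P : ℤ} {p m : ℕ} {fv : ℤ → ℤ} {fe : Sym2 ℤ → ℤ} {κ : ℤ}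
  (ht : 1 ≤ t) (hP : P = 2 * t + 1)
  (hp3 : 3 ≤ p) (hpodd : Odd p) (hm3 : 3 ≤ m) (hcond : Odd m ∨ p ≤ m)
  (hPp : P = (p : ℤ))
  (hfv1 : ∀ x ∈ Finset.Icc (1 : ℤ) (m : ℤ), 1 ≤ fv x ∧ fv x ≤ 2 * m)
  (hfe1 : ∀ e ∈ cycleEdges m, 1 ≤ fe e ∧ fe e ≤ 2 * m)
  (hfvinj : Set.InjOn fv ((Finset.Icc (1 : ℤ) (m : ℤ)) : Set ℤ))
  (hfeinj : Set.InjOn fe ((cycleEdges m : Finset (Sym2 ℤ)) : Set (Sym2 ℤ)))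
  (hdisj : Disjoint ((Finset.Icc (1 : ℤ) (m : ℤ)).image fv) ((cycleEdges m).image fe))
  (hmagic : ∀ u v : ℤ, s(u, v) ∈ cycleEdges m → fv u + fe s(u, v) + fv v = κ)
include ht hP hp3 hpodd hm3 hcond hPp

omit ht hP hp3 hpodd hcond hPp in
include hmagic in
lemma BV_magic (hq : 0 ≤ t) (hP' : P = 2 * t + 1) (j : ℕ) :
    BV t P (qch p m) m fv j + BE t P (qch p m) m fe j + BV t P (qch p m) m fv (j + 1)
      = P * κ - 3 * t := by
  have hbm : (0:ℕ) < m := by omega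
  have hmem := bE_mem hbm (m := m) j
  have h := hmagic (bV m j) (if bV m j = (m : ℤ) then 1 else bV m j + 1) hmem
  unfold BV BE bE em
  rw [bV_succ hbm j]
  linear_combination P * h - 3 * hP'

lemma BV_N : BV t P (qch p m) m fv (p * m) = BV t P (qch p m) m fv 0 := by
  have h1 : (p * m) % m = 0 % m := by rw [Nat.mul_mod_left, Nat.zero_mod]
  have h2 : (p * m) / m = p := Nat.mul_div_cancel _ (by omega)
  have h3 : um t P (qch p m) m (p * m) = um t P (qch p m) m 0 := by
    unfold um
    rw [h1, h2, Nat.zero_div]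
    apply gm_congr
    have hp0 : ((p : ℤ)) ≡ ((0:ℕ) : ℤ) [ZMOD P] := by
      push_cast
      exact Int.modEq_iff_dvd.mpr ⟨-1, by rw [hPp]; ring⟩
    exact Int.ModEq.add_left _ hp0
  unfold BV
  rw [h3]
  unfold bV
  rw [h1]

include hfv1 in
lemma BV_bounds (j : ℕ) : 1 ≤ BV t P (qch p m) m fv j ∧ BV t P (qch p m) m fv j ≤ 2 * P * m := by
  have h1 := hfv1 (bV m j) (Finset.mem_Icc.mpr (bV_mem (by omega) j))
  have h2 := um_bounds ht hP (m := m) (qch p m) j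
  have hm' : (1:ℤ) ≤ m := by exact_mod_cast (by omega : (1:ℕ) ≤ m)
  unfold BV
  constructor
  · nlinarith [mul_nonneg (by omega : (0:ℤ) ≤ P) (by linarith [h1.1] : (0:ℤ) ≤ fv (bV m j) - 1),
      h2.1]
  · nlinarith [mul_nonneg (by omega : (0:ℤ) ≤ P)
      (by linarith [h1.2] : (0:ℤ) ≤ 2 * (m:ℤ) - fv (bV m j)), h2.2]

include hfe1 in
omit hfv1 in
lemma BE_bounds (j : ℕ) : 1 ≤ BE t P (qch p m) m fe j ∧ BE t P (qch p m) m fe j ≤ 2 * P * m := by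
  have h1 := hfe1 (bE m j) (bE_mem (by omega) j)
  have h2 := em_bounds ht hP hp3 hpodd hm3 hcond hPp (m := m) j
  have hm' : (1:ℤ) ≤ m := by exact_mod_cast (by omega : (1:ℕ) ≤ m)
  unfold BE
  constructor
  · nlinarith [mul_nonneg (by omega : (0:ℤ) ≤ P) (by linarith [h1.1] : (0:ℤ) ≤ fe (bE m j) - 1),
      h2.1]
  · nlinarith [mul_nonneg (by omega : (0:ℤ) ≤ P)
      (by linarith [h1.2] : (0:ℤ) ≤ 2 * (m:ℤ) - fe (bE m j)), h2.2]

include hfvinj in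
lemma BV_inj {j j' : ℕ} (hj : j < p * m) (hj' : j' < p * m)
    (h : BV t P (qch p m) m fv j = BV t P (qch p m) m fv j') : j = j' := by
  have h1 := um_bounds ht hP (m := m) (qch p m) j
  have h2 := um_bounds ht hP (m := m) (qch p m) j'
  obtain ⟨hfveq, humeq⟩ := split_eq (by omega : (0:ℤ) < P) h1.1 h1.2 h2.1 h2.2 h
  have hbv : bV m j = bV m j' := by
    apply hfvinj ?_ ?_ hfveq
    · simpa [coe_Icc, Set.mem_Icc] using bV_mem (by omega : 0 < m) j
    · simpa [coe_Icc, Set.mem_Icc] using bV_mem (by omega : 0 < m) j'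
  have hmod : j % m = j' % m := by unfold bV at hbv; omega
  exact um_inj ht hP hp3 hpodd hm3 hcond hPp hj hj' hmod humeq

include hfeinj in
omit hfvinj hfv1 in
include hfe1 in
lemma BE_inj {j j' : ℕ} (hj : j < p * m) (hj' : j' < p * m)
    (h : BE t P (qch p m) m fe j = BE t P (qch p m) m fe j') : j = j' := by
  have h1 := em_bounds ht hP hp3 hpodd hm3 hcond hPp (m := m) j
  have h2 := em_bounds ht hP hp3 hpodd hm3 hcond hPp (m := m) j'
  obtain ⟨hfeeq, hemeq⟩ := split_eq (by omega : (0:ℤ) < P) h1.1 h1.2 h2.1 h2.2 h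
  have hbe : bE m j = bE m j' := by
    apply hfeinj (by exact_mod_cast bE_mem (by omega : 0 < m) j)
      (by exact_mod_cast bE_mem (by omega : 0 < m) j') hfeeq
  have hbv : bV m j = bV m j' := by
    apply cycle_injOn hm3 ?_ ?_ hbe
    · simpa [coe_Icc, Set.mem_Icc] using bV_mem (by omega : 0 < m) j
    · simpa [coe_Icc, Set.mem_Icc] using bV_mem (by omega : 0 < m) j'
  have hmod : j % m = j' % m := by unfold bV at hbv; omega
  exact em_inj ht hP hp3 hpodd hm3 hcond hPp hj hj' hmod hemeq

include hdisj in
omit hfvinj in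
lemma BV_ne_BE (j k : ℕ) : BV t P (qch p m) m fv j ≠ BE t P (qch p m) m fe k := by
  intro h
  have h1 := um_bounds ht hP (m := m) (qch p m) j
  have h2 := em_bounds ht hP hp3 hpodd hm3 hcond hPp (m := m) k
  obtain ⟨heq, -⟩ := split_eq (by omega : (0:ℤ) < P) h1.1 h1.2 h2.1 h2.2 h
  have hmem1 : fv (bV m j) ∈ (Finset.Icc (1 : ℤ) (m : ℤ)).image fv :=
    Finset.mem_image_of_mem _ (Finset.mem_Icc.mpr (bV_mem (by omega) j))
  have hmem2 : fe (bE m k) ∈ (cycleEdges m).image fe :=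
    Finset.mem_image_of_mem _ (bE_mem (by omega) k)
  rw [heq] at hmem1
  exact Finset.disjoint_left.mp hdisj hmem1 hmem2

end graph

end S17

namespace S17

lemma Ge_eval {t P : ℤ} {q m N : ℕ} {fe : Sym2 ℤ → ℤ} (hN : 3 ≤ N) {i : ℤ}
    (h1 : 1 ≤ i) (h2 : i ≤ (N : ℤ)) :
    Ge t P q m N fe s(i, if i = (N : ℤ) then 1 else i + 1) = BE t P q m fe (i - 1).toNat := by
  have hN' : (3 : ℤ) ≤ (N : ℤ) := by exact_mod_cast hN
  unfold Ge
  rw [Sym2.lift_mk]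
  by_cases hiN : i = (N : ℤ)
  · rw [if_pos hiN]
    simp only []
    rw [if_pos (Or.inr ⟨trivial, hiN⟩)]
    congr 1
    omega
  · rw [if_neg hiN]
    simp only []
    rw [if_neg (by omega : ¬((i = 1 ∧ i + 1 = (N:ℤ)) ∨ (i + 1 = 1 ∧ i = (N:ℤ))))]
    congr 1
    rw [min_eq_left (by omega : i ≤ i + 1)]

end S17

open S17

/-- Let `p ≥ 3` be odd and suppose the cycle `C_m` (`m ≥ 3`) has an edge-magic labeling
`f`. If `m` is odd or `m ≥ p`, then `C_{pm}` has an edge-magic labeling with valence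
`p·val(f) - 3(p-1)/2`. -/
theorem stmt17 (p m : ℕ) (hp3 : 3 ≤ p) (hpodd : Odd p) (hm3 : 3 ≤ m)
    (hcond : Odd m ∨ p ≤ m)
    (fv : ℤ → ℤ) (fe : Sym2 ℤ → ℤ) (κ : ℤ)
    (hf : IsEdgeMagicG (Finset.Icc (1 : ℤ) (m : ℤ)) (cycleEdges m) fv fe κ) :
    ∃ gv ge,
      IsEdgeMagicG (Finset.Icc (1 : ℤ) ((p * m : ℕ) : ℤ)) (cycleEdges (p * m)) gv ge
        ((p : ℤ) * κ - 3 * (((p : ℤ) - 1) / 2)) := by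
  classical
  obtain ⟨c, hc⟩ := id hpodd
  set t : ℤ := (c : ℤ) with htdef
  set P : ℤ := (p : ℤ) with hPdef
  have ht : 1 ≤ t := by simp only [htdef]; exact_mod_cast (by omega : 1 ≤ c)
  have hP : P = 2 * t + 1 := by rw [hPdef, htdef, hc]; push_cast; ring
  have hPp : P = (p : ℤ) := rfl
  have hval : (p : ℤ) * κ - 3 * (((p : ℤ) - 1) / 2) = P * κ - 3 * t := by
    have h2t : ((p : ℤ) - 1) = 2 * t := by rw [← hPdef, hP]; ring
    rw [h2t, Int.mul_ediv_cancel_left _ (by norm_num), ← hPdef]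
  set N := p * m with hNdef
  have hN3 : 3 ≤ N := by
    have := Nat.mul_le_mul hp3 hm3
    omega
  have hmpos : 0 < m := by omega
  -- base facts
  obtain ⟨hf1, hmagic⟩ := hf
  have hcardEm : (cycleEdges m).card = m := cycleEdges_card hm3
  have hcardVm : (Finset.Icc (1 : ℤ) (m : ℤ)).card = m := by
    rw [Int.card_Icc]; omega
  rw [hcardEm, hcardVm] at hf1
  have hAle : ((Finset.Icc (1 : ℤ) (m : ℤ)).image fv).card ≤ m :=
    le_trans Finset.card_image_le (le_of_eq hcardVm)
  have hBle : ((cycleEdges m).image fe).card ≤ m :=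
    le_trans Finset.card_image_le (le_of_eq hcardEm)
  have hcardU : (((Finset.Icc (1 : ℤ) (m : ℤ)).image fv) ∪ ((cycleEdges m).image fe)).card
      = 2 * m := by
    rw [hf1, Int.card_Icc]; omega
  have hsum := Finset.card_union_add_card_inter
    ((Finset.Icc (1 : ℤ) (m : ℤ)).image fv) ((cycleEdges m).image fe)
  have hAcard : ((Finset.Icc (1 : ℤ) (m : ℤ)).image fv).card = m := by omega
  have hBcard : ((cycleEdges m).image fe).card = m := by omega
  have hIcard : (((Finset.Icc (1 : ℤ) (m : ℤ)).image fv) ∩ ((cycleEdges m).image fe)).card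
      = 0 := by omega
  have hdisj : Disjoint ((Finset.Icc (1 : ℤ) (m : ℤ)).image fv) ((cycleEdges m).image fe) := by
    rw [Finset.disjoint_iff_inter_eq_empty]
    exact Finset.card_eq_zero.mp hIcard
  have hfvinj : Set.InjOn fv ((Finset.Icc (1 : ℤ) (m : ℤ)) : Set ℤ) :=
    Finset.card_image_iff.mp (by rw [hAcard, hcardVm])
  have hfeinj : Set.InjOn fe ((cycleEdges m : Finset (Sym2 ℤ)) : Set (Sym2 ℤ)) :=
    Finset.card_image_iff.mp (by rw [hBcard, hcardEm])
  have hfv1 : ∀ x ∈ Finset.Icc (1 : ℤ) (m : ℤ), 1 ≤ fv x ∧ fv x ≤ 2 * m := by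
    intro x hx
    have : fv x ∈ Finset.Icc (1 : ℤ) ((m : ℤ) + m) := by
      rw [← hf1]
      exact Finset.mem_union_left _ (Finset.mem_image_of_mem _ hx)
    rw [Finset.mem_Icc] at this
    omega
  have hfe1 : ∀ e ∈ cycleEdges m, 1 ≤ fe e ∧ fe e ≤ 2 * m := by
    intro e he
    have : fe e ∈ Finset.Icc (1 : ℤ) ((m : ℤ) + m) := by
      rw [← hf1]
      exact Finset.mem_union_right _ (Finset.mem_image_of_mem _ he)
    rw [Finset.mem_Icc] at this
    omega
  -- the new labeling
  refine ⟨Gv t P (qch p m) m fv, Ge t P (qch p m) m N fe, ?_, ?_⟩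
  -- Part 1: bijectivity
  · have hcardVN : (Finset.Icc (1 : ℤ) (N : ℤ)).card = N := by
      rw [Int.card_Icc]; omega
    have hcardEN : (cycleEdges N).card = N := cycleEdges_card hN3
    rw [hcardVN, hcardEN]
    -- representation of members
    have hGvrep : ∀ a ∈ (Finset.Icc (1 : ℤ) (N : ℤ)).image (Gv t P (qch p m) m fv),
        ∃ j < N, a = BV t P (qch p m) m fv j := by
      intro a ha
      obtain ⟨x, hx, rfl⟩ := Finset.mem_image.mp ha
      rw [Finset.mem_Icc] at hx
      exact ⟨(x - 1).toNat, by omega, rfl⟩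
    have hGerep : ∀ a ∈ (cycleEdges N).image (Ge t P (qch p m) m N fe),
        ∃ j < N, a = BE t P (qch p m) m fe j := by
      intro a ha
      obtain ⟨e, he, rfl⟩ := Finset.mem_image.mp ha
      obtain ⟨i, hi, rfl⟩ := Finset.mem_image.mp he
      rw [Finset.mem_Icc] at hi
      refine ⟨(i - 1).toNat, by omega, ?_⟩
      rw [Ge_eval hN3 hi.1 hi.2]
    have hbig : 2 * P * (m : ℤ) = (N : ℤ) + (N : ℤ) := by
      rw [hPdef, hNdef]; push_cast; ring
    apply Finset.eq_of_subset_of_card_le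
    · intro a ha
      rw [Finset.mem_Icc]
      rcases Finset.mem_union.mp ha with h | h
      · obtain ⟨j, hj, rfl⟩ := hGvrep _ h
        have := BV_bounds ht hP hp3 hpodd hm3 hcond hPp hfv1 j
        omega
      · obtain ⟨j, hj, rfl⟩ := hGerep _ h
        have := BE_bounds ht hP hp3 hpodd hm3 hcond hPp hfe1 j
        omega
    · have hdisjN : Disjoint
          ((Finset.Icc (1 : ℤ) (N : ℤ)).image (Gv t P (qch p m) m fv))
          ((cycleEdges N).image (Ge t P (qch p m) m N fe)) := by
        rw [Finset.disjoint_left]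
        intro a ha hb
        obtain ⟨j, hj, rfl⟩ := hGvrep _ ha
        obtain ⟨k, hk, hBE⟩ := hGerep _ hb
        exact BV_ne_BE ht hP hp3 hpodd hm3 hcond hPp hdisj j k hBE
      rw [Finset.card_union_of_disjoint hdisjN]
      have hinjGv : Set.InjOn (Gv t P (qch p m) m fv)
          ((Finset.Icc (1 : ℤ) (N : ℤ)) : Set ℤ) := by
        intro x hx y hy hxy
        simp only [Finset.coe_Icc, Set.mem_Icc] at hx hy
        have hj : (x - 1).toNat < N := by omega
        have hj' : (y - 1).toNat < N := by omega
        have := BV_inj ht hP hp3 hpodd hm3 hcond hPp hfvinj hj hj' hxy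
        omega
      have hinjGe : Set.InjOn (Ge t P (qch p m) m N fe)
          ((cycleEdges N : Finset (Sym2 ℤ)) : Set (Sym2 ℤ)) := by
        intro e he e' he'
        obtain ⟨i, hi, rfl⟩ := Finset.mem_image.mp he
        obtain ⟨i', hi', rfl⟩ := Finset.mem_image.mp he'
        rw [Finset.mem_Icc] at hi hi'
        intro hee
        rw [Ge_eval hN3 hi.1 hi.2, Ge_eval hN3 hi'.1 hi'.2] at hee
        have h1 : (i - 1).toNat < N := by omega
        have h2 : (i' - 1).toNat < N := by omega
        have := BE_inj ht hP hp3 hpodd hm3 hcond hPp hfe1 hfeinj h1 h2 hee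
        have : i = i' := by omega
        rw [this]
      rw [Finset.card_image_of_injOn hinjGv, Finset.card_image_of_injOn hinjGe,
        hcardVN, hcardEN, Int.card_Icc]
      omega
  -- Part 2: the magic condition
  · intro u v huv
    rw [hval]
    obtain ⟨i, hi, hEq⟩ := Finset.mem_image.mp huv
    rw [Finset.mem_Icc] at hi
    have key : Gv t P (qch p m) m fv i
        + Ge t P (qch p m) m N fe s(i, if i = (N : ℤ) then 1 else i + 1)
        + Gv t P (qch p m) m fv (if i = (N : ℤ) then 1 else i + 1) = P * κ - 3 * t := by
      have hge := Ge_eval (t := t) (P := P) (q := qch p m) (m := m) (N := N) (fe := fe) hN3 hi.1 hi.2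
      rw [hge]
      have hgv2 : Gv t P (qch p m) m fv (if i = (N : ℤ) then 1 else i + 1)
          = BV t P (qch p m) m fv ((i - 1).toNat + 1) := by
        split_ifs with hiN
        · have hj1 : (i - 1).toNat + 1 = N := by omega
          rw [hj1]
          have h0 : ((1 : ℤ) - 1).toNat = 0 := by norm_num
          unfold Gv
          rw [h0]
          exact (BV_N ht hP hp3 hpodd hm3 hcond hPp).symm
        · unfold Gv
          congr 1
          omega
      rw [hgv2]
      exact BV_magic hm3 hmagic (by omega) hP ((i - 1).toNat)
    rcases Sym2.eq_iff.mp hEq with ⟨h1, h2⟩ | ⟨h1, h2⟩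
    · subst h1
      subst h2
      exact key
    · subst h1
      subst h2
      rw [Sym2.eq_swap]
      linarith [key]
end

section
/- Let p ≥ 3 be odd and suppose the cycle C_m (m ≥ 3) has an edge-magic labeling f. Then the cycle C_{pm} has an edge-magic labeling with valence 3(p−1)m + val(f). -/
open Finset

namespace Stmt18Aux

/-- step signs: +1 for the first m/2+1 positions, -1 afterwards -/
def eps (m r : ℤ) : ℤ := if r ≤ m / 2 + 1 then 1 else -1

/-- partial sums of eps: pr m r = eps 1 + ... + eps (r-1) -/
def pr (m r : ℤ) : ℤ := if r ≤ m / 2 + 2 then r - 1 else 2 * (m / 2 + 1) - r + 1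

/-- total sum of eps over a block: 1 if m odd, 2 if m even -/
def ee (m : ℤ) : ℤ := 2 - m % 2

/-- cumulative sign sum at vertex i -/
def S (m i : ℤ) : ℤ := ee m * ((i - 1) / m) + pr m ((i - 1) % m + 1)

/-- vertex offset, in [0, 2k] -/
def T (k m i : ℤ) : ℤ := ((k + 1) * S m i) % (2 * k + 1)

/-- offset of the "next" vertex along edge i -/
def U (k m i : ℤ) : ℤ := ((k + 1) * (S m i + eps m ((i - 1) % m + 1))) % (2 * k + 1)

/-- edge offset -/
def sv (k m i : ℤ) : ℤ := 3 * k - T k m i - U k m i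

lemma eps_cases (m r : ℤ) : eps m r = 1 ∨ eps m r = -1 := by
  unfold eps; split <;> simp

lemma ee_cases (m : ℤ) : ee m = 1 ∨ ee m = 2 := by
  unfold ee; omega

lemma emod_two_cases (p x : ℤ) (hp : 0 < p) (h0 : 0 ≤ x) (h1 : x < 2 * p) :
    x % p = x ∨ x % p = x - p := by
  rcases lt_or_ge x p with h | h
  · exact Or.inl (Int.emod_eq_of_lt h0 h)
  · right
    have : (x - p) % p = x - p := Int.emod_eq_of_lt (by omega) (by omega)
    calc x % p = (x - p + p * 1) % p := by ring_nf
    _ = (x - p) % p := by rw [Int.add_mul_emod_self_left]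
    _ = x - p := this

lemma div_add_emod' (a b : ℤ) : a = b * (a / b) + a % b := (Int.mul_ediv_add_emod a b).symm

/-- decompose i-1 = m*q + r0 -/
lemma decomp (m i : ℤ) (hm : 0 < m) :
    (i - 1) = m * ((i - 1) / m) + (i - 1) % m ∧ 0 ≤ (i - 1) % m ∧ (i - 1) % m < m :=
  ⟨(Int.mul_ediv_add_emod _ _).symm, Int.emod_nonneg _ (by omega), Int.emod_lt_of_pos _ hm⟩

lemma ediv_emod_of_eq (m q r x : ℤ) (hm : 0 < m) (hx : x = m * q + r) (h0 : 0 ≤ r) (h1 : r < m) :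
    x / m = q ∧ x % m = r := by
  exact (Int.ediv_emod_unique hm).mpr ⟨by omega, h0, h1⟩

/-- S step property -/
lemma S_step (m i : ℤ) (hm : 3 ≤ m) :
    S m (i + 1) = S m i + eps m ((i - 1) % m + 1) := by
  obtain ⟨hd, h0, h1⟩ := decomp m i (by omega)
  set q := (i - 1) / m with hq
  set r0 := (i - 1) % m with hr0
  rcases lt_or_ge r0 (m - 1) with hcase | hcase
  · -- interior: (i+1)-1 = i = m*q + (r0+1)
    obtain ⟨hdiv, hmod⟩ := ediv_emod_of_eq m q (r0 + 1) ((i+1)-1) (by omega) (by omega) (by omega) (by omega)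
    unfold S
    rw [hdiv, hmod, ← hq, ← hr0]
    have : pr m (r0 + 1 + 1) = pr m (r0 + 1) + eps m (r0 + 1) := by
      unfold pr eps
      have h2 : m / 2 * 2 ≤ m ∧ m ≤ m / 2 * 2 + 1 := by omega
      split_ifs <;> omega
    omega
  · -- block boundary: r0 = m - 1, i = m*(q+1)
    have hr : r0 = m - 1 := by omega
    obtain ⟨hdiv, hmod⟩ := ediv_emod_of_eq m (q + 1) 0 ((i+1)-1) (by omega)
      (by linear_combination hd + hr) (by omega) (by omega)
    unfold S
    rw [hdiv, hmod, ← hq, ← hr0, hr]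
    have hprm : pr m (m - 1 + 1) = ee m + 1 := by
      unfold pr ee
      have h2 : m / 2 * 2 ≤ m ∧ m ≤ m / 2 * 2 + 1 := by omega
      split_ifs <;> omega
    have hepsm : eps m (m - 1 + 1) = -1 := by
      unfold eps
      have h2 : m / 2 * 2 ≤ m ∧ m ≤ m / 2 * 2 + 1 := by omega
      split_ifs <;> omega
    have hpr1 : pr m (0 + 1) = 0 := by
      unfold pr
      have h2 : m / 2 * 2 ≤ m ∧ m ≤ m / 2 * 2 + 1 := by omega
      split_ifs <;> omega
    rw [hprm, hepsm, hpr1]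
    ring
  
lemma S_class (m r j : ℤ) (hm : 3 ≤ m) (hr1 : 1 ≤ r) (hr2 : r ≤ m) :
    S m (r + j * m) = ee m * j + pr m r ∧ (r + j * m - 1) % m = r - 1 := by
  obtain ⟨hdiv, hmod⟩ := ediv_emod_of_eq m j (r - 1) (r + j * m - 1) (by omega) (by ring) (by omega) (by omega)
  constructor
  · unfold S; rw [hdiv, hmod]; ring_nf
  · exact hmod

lemma S_one (m : ℤ) (hm : 3 ≤ m) : S m 1 = 0 := by
  have h := (S_class m 1 0 hm (by omega) (by omega)).1
  have hpr1 : pr m 1 = 0 := by unfold pr; split_ifs <;> omega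
  simp [hpr1] at h
  exact h

end Stmt18Aux

namespace Stmt18Aux

lemma pr_m (m : ℤ) (hm : 3 ≤ m) : pr m m = ee m + 1 := by
  unfold pr ee
  have h2 : m / 2 * 2 ≤ m ∧ m ≤ m / 2 * 2 + 1 := by omega
  split_ifs <;> omega

lemma eps_m (m : ℤ) (hm : 3 ≤ m) : eps m m = -1 := by
  unfold eps
  have h2 : m / 2 * 2 ≤ m ∧ m ≤ m / 2 * 2 + 1 := by omega
  split_ifs <;> omega

lemma T_bounds (k m i : ℤ) (hk : 1 ≤ k) : 0 ≤ T k m i ∧ T k m i ≤ 2 * k := by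
  unfold T
  constructor
  · exact Int.emod_nonneg _ (by omega)
  · have := Int.emod_lt_of_pos ((k + 1) * S m i) (b := 2 * k + 1) (by omega)
    omega

lemma U_bounds (k m i : ℤ) (hk : 1 ≤ k) : 0 ≤ U k m i ∧ U k m i ≤ 2 * k := by
  unfold U
  constructor
  · exact Int.emod_nonneg _ (by omega)
  · have := Int.emod_lt_of_pos ((k + 1) * (S m i + eps m ((i - 1) % m + 1))) (b := 2 * k + 1) (by omega)
    omega

/-- The key window property: T + U lies in [k, 3k]. -/
lemma TU_window (k m i : ℤ) (hk : 1 ≤ k) : k ≤ T k m i + U k m i ∧ T k m i + U k m i ≤ 3 * k := by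
  set p := 2 * k + 1 with hp
  set X := (k + 1) * S m i with hX
  set ε := eps m ((i - 1) % m + 1) with he
  have hU : U k m i = (T k m i + (k + 1) * ε % p) % p := by
    unfold U T
    rw [← hX, mul_add, Int.add_emod]
  have hd : (k + 1) * ε % p = k + 1 ∨ (k + 1) * ε % p = k := by
    rcases eps_cases m ((i - 1) % m + 1) with h | h <;> rw [← he] at h <;> rw [h]
    · left; rw [mul_one]; exact Int.emod_eq_of_lt (by omega) (by omega)
    · right
      have : (k + 1) * (-1) = k + p * (-1) := by rw [hp]; ring
      rw [this, Int.add_mul_emod_self_left]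
      exact Int.emod_eq_of_lt (by omega) (by omega)
  obtain ⟨hT0, hT1⟩ := T_bounds k m i hk
  obtain ⟨hU0, hU1⟩ := U_bounds k m i hk
  rcases hd with hd | hd <;> rw [hd] at hU
  · rcases emod_two_cases p (T k m i + (k + 1)) (by omega) (by omega) (by omega) with h | h <;> omega
  · rcases emod_two_cases p (T k m i + k) (by omega) (by omega) (by omega) with h | h <;> omega

lemma sv_bounds (k m i : ℤ) (hk : 1 ≤ k) : 0 ≤ sv k m i ∧ sv k m i ≤ 2 * k := by
  have := TU_window k m i hk
  unfold sv; omega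

lemma TUsv (k m i : ℤ) : T k m i + U k m i + sv k m i = 3 * k := by unfold sv; ring

/-- T of the cyclically-next vertex equals U. -/
lemma T_next (k m i : ℤ) (hk : 1 ≤ k) (hm : 3 ≤ m) (hi1 : 1 ≤ i) (hi2 : i ≤ (2 * k + 1) * m) :
    T k m (if i = (2 * k + 1) * m then 1 else i + 1) = U k m i := by
  split_ifs with hc
  · -- i = p*m
    have h1 : T k m 1 = 0 := by
      unfold T
      rw [S_one m hm]
      simp
    rw [h1]
    have h2 : (i - 1) % m = m - 1 := by
      rw [hc]
      have : (2 * k + 1) * m - 1 = (m - 1) + ((2 * k) * m) := by ring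
      have := (ediv_emod_of_eq m (2 * k) (m - 1) ((2 * k + 1) * m - 1) (by omega)
        (by ring) (by omega) (by omega)).2
      omega
    have h3 : S m i = ee m * (2 * k) + pr m m := by
      have := (S_class m m (2 * k) hm (by omega) (by omega)).1
      rw [hc]
      have heq : (2 * k + 1) * m = m + 2 * k * m := by ring
      rw [heq]
      exact this
    unfold U
    rw [h2, h3]
    have h4 : m - 1 + 1 = m := by ring
    rw [h4, eps_m m hm, pr_m m hm]
    have h5 : (k + 1) * (ee m * (2 * k) + (ee m + 1) + -1) = ((k + 1) * ee m) * (2 * k + 1) := by ring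
    rw [h5, Int.mul_emod_left]
  · unfold T U
    rw [S_step m i hm]

/-- values of T on the residue class r -/
lemma T_class (k m r j : ℤ) (hm : 3 ≤ m) (hr1 : 1 ≤ r) (hr2 : r ≤ m) :
    T k m (r + j * m) = ((k + 1) * (ee m * j + pr m r)) % (2 * k + 1) := by
  unfold T
  rw [(S_class m r j hm hr1 hr2).1]

/-- T + U mod p on the class r is linear in j -/
lemma TU_class (k m r j : ℤ) (hm : 3 ≤ m) (hr1 : 1 ≤ r) (hr2 : r ≤ m) :
    (T k m (r + j * m) + U k m (r + j * m)) % (2 * k + 1)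
      = (ee m * j + pr m r + (k + 1) * eps m r) % (2 * k + 1) := by
  obtain ⟨hS, hmod⟩ := S_class m r j hm hr1 hr2
  unfold T U
  rw [hS, hmod]
  have h4 : r - 1 + 1 = r := by ring
  rw [h4]
  set Y := ee m * j + pr m r with hY
  set D := (k + 1) * eps m r with hD
  rw [← Int.add_emod]
  have h5 : (k + 1) * Y + (k + 1) * (Y + eps m r) = (Y + D) + (2 * k + 1) * Y := by
    rw [hD]; ring
  rw [h5, Int.add_mul_emod_self_left]

lemma dvd_halve (k d : ℤ) (h : (2 * k + 1) ∣ 2 * d) : (2 * k + 1) ∣ d := by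
  obtain ⟨c, hc⟩ := h
  have he : Even ((2 * k + 1) * c) := ⟨d, by linarith⟩
  rcases Int.even_mul.mp he with ⟨t, ht⟩ | ⟨t, ht⟩
  · omega
  · refine ⟨t, ?_⟩
    have h2 : 2 * d = 2 * ((2 * k + 1) * t) := by rw [hc, ht]; ring
    omega

/-- core injectivity: equal T-type values on a class force equal indices -/
lemma inj_core (k m j j' c0 : ℤ) (hk : 1 ≤ k) (hj : 0 ≤ j) (hj2 : j ≤ 2 * k)
    (hj' : 0 ≤ j') (hj2' : j' ≤ 2 * k)
    (h : ((k + 1) * (ee m * j + c0)) % (2 * k + 1) = ((k + 1) * (ee m * j' + c0)) % (2 * k + 1)) :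
    j = j' := by
  set p := 2 * k + 1 with hp
  have h1 : p ∣ (k + 1) * (ee m * j + c0) - (k + 1) * (ee m * j' + c0) := by
    have := Int.emod_eq_emod_iff_emod_sub_eq_zero.mp h
    exact Int.dvd_of_emod_eq_zero this
  have h2 : p ∣ (k + 1) * ee m * (j - j') := by
    have : (k + 1) * (ee m * j + c0) - (k + 1) * (ee m * j' + c0) = (k + 1) * ee m * (j - j') := by ring
    rwa [this] at h1
  have h3 : p ∣ ee m * (j - j') := by
    obtain ⟨c, hc⟩ := h2
    exact ⟨2 * c - ee m * (j - j'), by linear_combination 2 * hc⟩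
  have h4 : p ∣ (j - j') := by
    rcases ee_cases m with he | he <;> rw [he] at h3
    · rwa [one_mul] at h3
    · exact dvd_halve k (j - j') (by rw [← hp]; exact h3)
  have h5 : j - j' = 0 := Int.eq_zero_of_abs_lt_dvd h4 (abs_lt.mpr ⟨by omega, by omega⟩)
  omega

end Stmt18Aux

namespace Stmt18Aux

lemma inj_core2 (k m j j' c0 : ℤ) (hk : 1 ≤ k) (hj : 0 ≤ j) (hj2 : j ≤ 2 * k)
    (hj' : 0 ≤ j') (hj2' : j' ≤ 2 * k)
    (h : (ee m * j + c0) % (2 * k + 1) = (ee m * j' + c0) % (2 * k + 1)) :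
    j = j' := by
  have h1 : (2 * k + 1) ∣ ee m * j + c0 - (ee m * j' + c0) :=
    Int.dvd_of_emod_eq_zero (Int.emod_eq_emod_iff_emod_sub_eq_zero.mp h)
  have h3 : (2 * k + 1) ∣ ee m * (j - j') := by
    have : ee m * j + c0 - (ee m * j' + c0) = ee m * (j - j') := by ring
    rwa [this] at h1
  have h4 : (2 * k + 1) ∣ (j - j') := by
    rcases ee_cases m with he | he <;> rw [he] at h3
    · rwa [one_mul] at h3
    · exact dvd_halve k (j - j') h3
  have h5 : j - j' = 0 := Int.eq_zero_of_abs_lt_dvd h4 (abs_lt.mpr ⟨by omega, by omega⟩)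
  omega

lemma card_Icc_int (a b : ℤ) (h : a ≤ b + 1) : ((Finset.Icc a b).card : ℤ) = b + 1 - a := by
  rw [Int.card_Icc]
  omega

lemma T_surj (k m r w : ℤ) (hk : 1 ≤ k) (hm : 3 ≤ m) (hr1 : 1 ≤ r) (hr2 : r ≤ m)
    (hw1 : 0 ≤ w) (hw2 : w ≤ 2 * k) :
    ∃ j, 0 ≤ j ∧ j ≤ 2 * k ∧ T k m (r + j * m) = w := by
  set f : ℤ → ℤ := fun j => T k m (r + j * m) with hf
  have hinj : Set.InjOn f ↑(Finset.Icc (0:ℤ) (2 * k)) := by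
    intro a ha b hb hab
    simp only [Finset.coe_Icc, Set.mem_Icc] at ha hb
    rw [hf] at hab
    simp only at hab
    rw [T_class k m r a hm hr1 hr2, T_class k m r b hm hr1 hr2] at hab
    exact inj_core k m a b (pr m r) hk ha.1 ha.2 hb.1 hb.2 hab
  have hsub : (Finset.Icc (0:ℤ) (2 * k)).image f ⊆ Finset.Icc 0 (2 * k) := by
    intro x hx
    obtain ⟨j, _, hj2⟩ := Finset.mem_image.mp hx
    rw [← hj2]
    have := T_bounds k m (r + j * m) hk
    exact Finset.mem_Icc.mpr ⟨this.1, this.2⟩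
  have hcard : (Finset.Icc (0:ℤ) (2 * k)).card ≤ ((Finset.Icc (0:ℤ) (2 * k)).image f).card := by
    rw [Finset.card_image_of_injOn hinj]
  have heq := Finset.eq_of_subset_of_card_le hsub hcard
  have hwmem : w ∈ (Finset.Icc (0:ℤ) (2 * k)).image f := by
    rw [heq]; exact Finset.mem_Icc.mpr ⟨hw1, hw2⟩
  obtain ⟨j, hj, hjw⟩ := Finset.mem_image.mp hwmem
  exact ⟨j, (Finset.mem_Icc.mp hj).1, (Finset.mem_Icc.mp hj).2, hjw⟩

lemma sv_surj (k m r w : ℤ) (hk : 1 ≤ k) (hm : 3 ≤ m) (hr1 : 1 ≤ r) (hr2 : r ≤ m)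
    (hw1 : 0 ≤ w) (hw2 : w ≤ 2 * k) :
    ∃ j, 0 ≤ j ∧ j ≤ 2 * k ∧ sv k m (r + j * m) = w := by
  set g : ℤ → ℤ := fun j => T k m (r + j * m) + U k m (r + j * m) with hg
  have hinj : Set.InjOn g ↑(Finset.Icc (0:ℤ) (2 * k)) := by
    intro a ha b hb hab
    simp only [Finset.coe_Icc, Set.mem_Icc] at ha hb
    rw [hg] at hab
    simp only at hab
    have hmod : (T k m (r + a * m) + U k m (r + a * m)) % (2 * k + 1)
        = (T k m (r + b * m) + U k m (r + b * m)) % (2 * k + 1) := by rw [hab]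
    rw [TU_class k m r a hm hr1 hr2, TU_class k m r b hm hr1 hr2] at hmod
    have hmod2 : (ee m * a + (pr m r + (k + 1) * eps m r)) % (2 * k + 1)
        = (ee m * b + (pr m r + (k + 1) * eps m r)) % (2 * k + 1) := by
      have e1 : ee m * a + pr m r + (k + 1) * eps m r = ee m * a + (pr m r + (k + 1) * eps m r) := by ring
      have e2 : ee m * b + pr m r + (k + 1) * eps m r = ee m * b + (pr m r + (k + 1) * eps m r) := by ring
      rw [← e1, ← e2]; exact hmod
    exact inj_core2 k m a b _ hk ha.1 ha.2 hb.1 hb.2 hmod2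
  have hsub : (Finset.Icc (0:ℤ) (2 * k)).image g ⊆ Finset.Icc k (3 * k) := by
    intro x hx
    obtain ⟨j, _, hj2⟩ := Finset.mem_image.mp hx
    rw [← hj2]
    have := TU_window k m (r + j * m) hk
    exact Finset.mem_Icc.mpr ⟨this.1, this.2⟩
  have hcard : (Finset.Icc k (3 * k)).card ≤ ((Finset.Icc (0:ℤ) (2 * k)).image g).card := by
    rw [Finset.card_image_of_injOn hinj]
    have h1 : ((Finset.Icc (0:ℤ) (2*k)).card : ℤ) = 2 * k + 1 := by
      rw [card_Icc_int] <;> omega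
    have h2 : ((Finset.Icc k (3*k)).card : ℤ) = 2 * k + 1 := by
      rw [card_Icc_int] <;> omega
    omega
  have heq := Finset.eq_of_subset_of_card_le hsub hcard
  have hwmem : 3 * k - w ∈ (Finset.Icc (0:ℤ) (2 * k)).image g := by
    rw [heq]; exact Finset.mem_Icc.mpr ⟨by omega, by omega⟩
  obtain ⟨j, hj, hjw⟩ := Finset.mem_image.mp hwmem
  refine ⟨j, (Finset.mem_Icc.mp hj).1, (Finset.mem_Icc.mp hj).2, ?_⟩
  unfold sv
  rw [hg] at hjw
  simp only at hjw
  omega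

end Stmt18Aux


namespace Stmt18Aux

def nxt (N i : ℤ) : ℤ := if i = N then 1 else i + 1

def pim (m i : ℤ) : ℤ := (i - 1) % m + 1

lemma ediv_emod_of_eq' (m q r x : ℤ) (hm : 0 < m) (hx : x = m * q + r) (h0 : 0 ≤ r) (h1 : r < m) :
    x / m = q ∧ x % m = r :=
  (Int.ediv_emod_unique hm).mpr ⟨by omega, h0, h1⟩

lemma pim_range (m i : ℤ) (hm : 0 < m) : 1 ≤ pim m i ∧ pim m i ≤ m := by
  unfold pim
  have h1 := Int.emod_nonneg (i - 1) (show m ≠ 0 by omega)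
  have h2 := Int.emod_lt_of_pos (i - 1) hm
  omega

lemma pim_class (m r j : ℤ) (hm : 0 < m) (hr1 : 1 ≤ r) (hr2 : r ≤ m) :
    pim m (r + j * m) = r := by
  unfold pim
  have := (ediv_emod_of_eq' m j (r - 1) (r + j * m - 1) hm (by ring) (by omega) (by omega)).2
  omega

lemma mem_cycleEdges (n : ℕ) (e : Sym2 ℤ) :
    e ∈ cycleEdges n ↔ ∃ i, 1 ≤ i ∧ i ≤ (n : ℤ) ∧ e = s(i, nxt (n : ℤ) i) := by
  unfold cycleEdges nxt
  rw [Finset.mem_image]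
  constructor
  · rintro ⟨i, hi, rfl⟩
    exact ⟨i, (Finset.mem_Icc.mp hi).1, (Finset.mem_Icc.mp hi).2, rfl⟩
  · rintro ⟨i, h1, h2, rfl⟩
    exact ⟨i, Finset.mem_Icc.mpr ⟨h1, h2⟩, rfl⟩

lemma edge_inj (N i i' : ℤ) (hN : 3 ≤ N) (h1 : 1 ≤ i) (h2 : i ≤ N) (h1' : 1 ≤ i') (h2' : i' ≤ N)
    (h : s(i, nxt N i) = s(i', nxt N i')) : i = i' := by
  rw [Sym2.eq_iff] at h
  unfold nxt at h
  rcases h with ⟨ha, hb⟩ | ⟨ha, hb⟩ <;> split_ifs at ha hb <;> omega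

lemma card_cycleEdges (n : ℕ) (hn : 3 ≤ n) : (cycleEdges n).card = n := by
  unfold cycleEdges
  rw [Finset.card_image_of_injOn, Int.card_Icc]
  · omega
  · intro a ha b hb hab
    simp only [Finset.coe_Icc, Set.mem_Icc] at ha hb
    exact edge_inj (n : ℤ) a b (by exact_mod_cast hn) ha.1 ha.2 hb.1 hb.2 hab

lemma pim_next (P m i : ℤ) (hP : 1 ≤ P) (hm : 3 ≤ m) (h1 : 1 ≤ i) (h2 : i ≤ P * m) :
    pim m (nxt (P * m) i) = nxt m (pim m i) := by
  have hm0 : (0:ℤ) < m := by omega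
  by_cases hc : i = P * m
  · have hnx : nxt (P * m) i = 1 := by unfold nxt; rw [if_pos hc]
    have hp1 : pim m 1 = 1 := by
      unfold pim
      norm_num
    have hpPm : pim m i = m := by
      rw [hc]
      unfold pim
      have := (ediv_emod_of_eq' m (P - 1) (m - 1) (P * m - 1) hm0 (by ring) (by omega) (by omega)).2
      omega
    rw [hnx, hp1]
    unfold nxt
    rw [hpPm, if_pos rfl]
  · have hnx : nxt (P * m) i = i + 1 := by unfold nxt; rw [if_neg hc]
    rw [hnx]
    have hd := Int.mul_ediv_add_emod (i - 1) m
    set q := (i - 1) / m with hq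
    set r0 := (i - 1) % m with hr0
    have hr0b : 0 ≤ r0 ∧ r0 < m := ⟨Int.emod_nonneg _ (by omega), Int.emod_lt_of_pos _ hm0⟩
    rcases lt_or_ge r0 (m - 1) with hcase | hcase
    · have hmod := (ediv_emod_of_eq' m q (r0 + 1) (i + 1 - 1) hm0 (by omega) (by omega) (by omega)).2
      unfold pim nxt
      rw [hmod, ← hr0]
      rw [if_neg (by omega)]
    · have hrm : r0 = m - 1 := by omega
      have hmod := (ediv_emod_of_eq' m (q + 1) 0 (i + 1 - 1) hm0 (by linear_combination -hd + hrm) (by omega) (by omega)).2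
      unfold pim nxt
      rw [hmod, ← hr0]
      rw [if_pos (by omega)]
      norm_num

lemma ge_eval (N : ℤ) (hN : 3 ≤ N) (val : ℤ → ℤ) (i : ℤ) (hi : 1 ≤ i) (hi2 : i ≤ N) :
    (∑ j ∈ Finset.Icc (1:ℤ) N, if s(i, nxt N i) = s(j, nxt N j) then val j else 0) = val i := by
  rw [Finset.sum_eq_single_of_mem i (Finset.mem_Icc.mpr ⟨hi, hi2⟩)]
  · rw [if_pos rfl]
  · intro b hb hne
    rw [if_neg]
    intro hcon
    exact hne (edge_inj N b i hN (Finset.mem_Icc.mp hb).1 (Finset.mem_Icc.mp hb).2 hi hi2 hcon.symm)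

end Stmt18Aux


set_option maxHeartbeats 1000000 in
/-- Let `p ≥ 3` be odd and suppose the cycle `C_m` (`m ≥ 3`) has an edge-magic labeling
`f`. Then `C_{pm}` has an edge-magic labeling with valence `3(p-1)m + val(f)`. -/
theorem stmt18 (p m : ℕ) (hp3 : 3 ≤ p) (hpodd : Odd p) (hm3 : 3 ≤ m)
    (fv : ℤ → ℤ) (fe : Sym2 ℤ → ℤ) (κ : ℤ)
    (hf : IsEdgeMagicG (Finset.Icc (1 : ℤ) (m : ℤ)) (cycleEdges m) fv fe κ) :
    ∃ gv ge,
      IsEdgeMagicG (Finset.Icc (1 : ℤ) ((p * m : ℕ) : ℤ)) (cycleEdges (p * m)) gv ge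
        (3 * ((p : ℤ) - 1) * (m : ℤ) + κ) := by
  classical
  open Stmt18Aux in
  obtain ⟨k0, hk0⟩ := hpodd
  have hk0' : p = 2 * k0 + 1 := by omega
  have hk : 1 ≤ (k0 : ℤ) := by
    have : 1 ≤ k0 := by omega
    exact_mod_cast this
  have hmZ : (3:ℤ) ≤ (m:ℤ) := by exact_mod_cast hm3
  have hm0 : (0:ℤ) < (m:ℤ) := by omega
  have hpZ : (p:ℤ) = 2 * (k0:ℤ) + 1 := by exact_mod_cast hk0'
  have hN : ((p * m : ℕ) : ℤ) = (2 * (k0:ℤ) + 1) * (m:ℤ) := by push_cast [hk0']; ring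
  have hpm3 : 3 ≤ p * m := by nlinarith
  have hN3 : (3:ℤ) ≤ ((p * m : ℕ) : ℤ) := by exact_mod_cast hpm3
  -- base-labeling facts
  obtain ⟨hf1, hf2⟩ := hf
  have hVcard : (((Finset.Icc (1:ℤ) (m:ℤ)).card : ℤ)) = (m:ℤ) := by
    rw [card_Icc_int] <;> omega
  have hEcard : (((cycleEdges m).card : ℤ)) = (m:ℤ) := by
    rw [card_cycleEdges m hm3]
  rw [hVcard, hEcard] at hf1
  have hfv_mem : ∀ r : ℤ, 1 ≤ r → r ≤ (m:ℤ) → 1 ≤ fv r ∧ fv r ≤ (m:ℤ) + (m:ℤ) := by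
    intro r h1 h2
    have hmem : fv r ∈ Finset.Icc (1:ℤ) ((m:ℤ) + (m:ℤ)) := by
      rw [← hf1]
      exact Finset.mem_union_left _ (Finset.mem_image_of_mem fv (Finset.mem_Icc.mpr ⟨h1, h2⟩))
    exact Finset.mem_Icc.mp hmem
  have hfe_mem : ∀ e ∈ cycleEdges m, 1 ≤ fe e ∧ fe e ≤ (m:ℤ) + (m:ℤ) := by
    intro e he
    have hmem : fe e ∈ Finset.Icc (1:ℤ) ((m:ℤ) + (m:ℤ)) := by
      rw [← hf1]
      exact Finset.mem_union_right _ (Finset.mem_image_of_mem fe he)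
    exact Finset.mem_Icc.mp hmem
  have hcover : ∀ L : ℤ, 1 ≤ L → L ≤ (m:ℤ) + (m:ℤ) →
      (∃ r : ℤ, 1 ≤ r ∧ r ≤ (m:ℤ) ∧ fv r = L) ∨ (∃ e ∈ cycleEdges m, fe e = L) := by
    intro L h1 h2
    have hmem : L ∈ (Finset.Icc (1:ℤ) (m:ℤ)).image fv ∪ (cycleEdges m).image fe := by
      rw [hf1]; exact Finset.mem_Icc.mpr ⟨h1, h2⟩
    rcases Finset.mem_union.mp hmem with h | h
    · obtain ⟨r, hr, hfr⟩ := Finset.mem_image.mp h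
      exact Or.inl ⟨r, (Finset.mem_Icc.mp hr).1, (Finset.mem_Icc.mp hr).2, hfr⟩
    · obtain ⟨e, he, hfe⟩ := Finset.mem_image.mp h
      exact Or.inr ⟨e, he, hfe⟩
  -- the new labelings
  refine ⟨fun i => fv (pim (m:ℤ) i) + 2 * (m:ℤ) * T (k0:ℤ) (m:ℤ) i,
    fun e => ∑ i ∈ Finset.Icc (1:ℤ) ((p * m : ℕ) : ℤ),
      if e = s(i, nxt ((p * m : ℕ) : ℤ) i) then
        (fe s(pim (m:ℤ) i, nxt (m:ℤ) (pim (m:ℤ) i)) + 2 * (m:ℤ) * sv (k0:ℤ) (m:ℤ) i)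
      else 0, ?_, ?_⟩
  · -- the bijection onto [1, 2pm]
    have hVcardN : (((Finset.Icc (1:ℤ) ((p * m : ℕ) : ℤ)).card : ℤ)) = ((p * m : ℕ) : ℤ) := by
      rw [card_Icc_int] <;> omega
    have hEcardN : (((cycleEdges (p * m)).card : ℤ)) = ((p * m : ℕ) : ℤ) := by
      rw [card_cycleEdges (p * m) hpm3]
    rw [hVcardN, hEcardN]
    ext L
    simp only [Finset.mem_union, Finset.mem_image, Finset.mem_Icc]
    constructor
    · rintro (⟨i, ⟨hi1, hi2⟩, rfl⟩ | ⟨e, he, rfl⟩)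
      · obtain ⟨hp1, hp2⟩ := pim_range (m:ℤ) i hm0
        obtain ⟨hv1, hv2⟩ := hfv_mem _ hp1 hp2
        obtain ⟨hT1, hT2⟩ := T_bounds (k0:ℤ) (m:ℤ) i hk
        have hb0 : 0 ≤ 2 * (m:ℤ) * T (k0:ℤ) (m:ℤ) i := mul_nonneg (by omega) hT1
        have hb1 : 2 * (m:ℤ) * T (k0:ℤ) (m:ℤ) i ≤ 2 * (m:ℤ) * (2 * (k0:ℤ)) :=
          mul_le_mul_of_nonneg_left hT2 (by omega)
        have hb2 : (2 * (k0:ℤ) + 1) * (m:ℤ) + (2 * (k0:ℤ) + 1) * (m:ℤ)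
            = ((m:ℤ) + (m:ℤ)) + 2 * (m:ℤ) * (2 * (k0:ℤ)) := by ring
        constructor
        · omega
        · rw [hN]; omega
      · obtain ⟨i, hi1, hi2, rfl⟩ := (mem_cycleEdges (p * m) e).mp he
        rw [ge_eval ((p * m : ℕ) : ℤ) hN3 _ i hi1 hi2]
        obtain ⟨hp1, hp2⟩ := pim_range (m:ℤ) i hm0
        have hbase : s(pim (m:ℤ) i, nxt (m:ℤ) (pim (m:ℤ) i)) ∈ cycleEdges m :=
          (mem_cycleEdges m _).mpr ⟨pim (m:ℤ) i, hp1, hp2, rfl⟩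
        obtain ⟨hv1, hv2⟩ := hfe_mem _ hbase
        obtain ⟨hs1, hs2⟩ := sv_bounds (k0:ℤ) (m:ℤ) i hk
        have hb0 : 0 ≤ 2 * (m:ℤ) * sv (k0:ℤ) (m:ℤ) i := mul_nonneg (by omega) hs1
        have hb1 : 2 * (m:ℤ) * sv (k0:ℤ) (m:ℤ) i ≤ 2 * (m:ℤ) * (2 * (k0:ℤ)) :=
          mul_le_mul_of_nonneg_left hs2 (by omega)
        have hb2 : (2 * (k0:ℤ) + 1) * (m:ℤ) + (2 * (k0:ℤ) + 1) * (m:ℤ)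
            = ((m:ℤ) + (m:ℤ)) + 2 * (m:ℤ) * (2 * (k0:ℤ)) := by ring
        constructor
        · omega
        · rw [hN]; omega
    · rintro ⟨hl1, hl2⟩
      have h2m : (0:ℤ) < 2 * (m:ℤ) := by omega
      have e1 := Int.mul_ediv_add_emod (L - 1) (2 * (m:ℤ))
      have e2 := Int.emod_nonneg (L - 1) (show (2 * (m:ℤ)) ≠ 0 by omega)
      have e3 := Int.emod_lt_of_pos (L - 1) h2m
      set j := (L - 1) / (2 * (m:ℤ)) with hj
      set R := (L - 1) % (2 * (m:ℤ)) with hR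
      have hj0 : 0 ≤ j := Int.ediv_nonneg (by omega) (by omega)
      have hj2 : j ≤ 2 * (k0:ℤ) := by
        by_contra hcon
        push_neg at hcon
        have hb1 : 2 * (m:ℤ) * (2 * (k0:ℤ) + 1) ≤ 2 * (m:ℤ) * j := by
          apply mul_le_mul_of_nonneg_left (by omega) (by omega)
        have hb2 : ((p * m : ℕ) : ℤ) + ((p * m : ℕ) : ℤ) = 2 * (m:ℤ) * (2 * (k0:ℤ) + 1) := by
          rw [hN]; ring
        omega
      rcases hcover (R + 1) (by omega) (by omega) with ⟨r, hr1, hr2, hfvr⟩ | ⟨e0, he0, hfee⟩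
      · obtain ⟨j', hj'0, hj'2, hT⟩ := T_surj (k0:ℤ) (m:ℤ) r j hk hmZ hr1 hr2 hj0 hj2
        left
        have hmul0 : 0 ≤ j' * (m:ℤ) := mul_nonneg hj'0 (by omega)
        have hmul1 : j' * (m:ℤ) ≤ 2 * (k0:ℤ) * (m:ℤ) := mul_le_mul_of_nonneg_right hj'2 (by omega)
        have hexp : (2 * (k0:ℤ) + 1) * (m:ℤ) = 2 * (k0:ℤ) * (m:ℤ) + (m:ℤ) := by ring
        refine ⟨r + j' * (m:ℤ), ⟨by omega, ?_⟩, ?_⟩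
        · rw [hN]; omega
        · rw [pim_class (m:ℤ) r j' hm0 hr1 hr2, hT, hfvr]
          omega
      · obtain ⟨r, hr1, hr2, rfl⟩ := (mem_cycleEdges m e0).mp he0
        obtain ⟨j', hj'0, hj'2, hsv⟩ := sv_surj (k0:ℤ) (m:ℤ) r j hk hmZ hr1 hr2 hj0 hj2
        right
        have hmul0 : 0 ≤ j' * (m:ℤ) := mul_nonneg hj'0 (by omega)
        have hmul1 : j' * (m:ℤ) ≤ 2 * (k0:ℤ) * (m:ℤ) := mul_le_mul_of_nonneg_right hj'2 (by omega)
        have hexp : (2 * (k0:ℤ) + 1) * (m:ℤ) = 2 * (k0:ℤ) * (m:ℤ) + (m:ℤ) := by ring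
        have hile : r + j' * (m:ℤ) ≤ ((p * m : ℕ) : ℤ) := by rw [hN]; omega
        refine ⟨s(r + j' * (m:ℤ), nxt ((p * m : ℕ) : ℤ) (r + j' * (m:ℤ))),
          (mem_cycleEdges (p * m) _).mpr ⟨r + j' * (m:ℤ), by omega, hile, rfl⟩, ?_⟩
        rw [ge_eval ((p * m : ℕ) : ℤ) hN3 _ (r + j' * (m:ℤ)) (by omega) hile]
        rw [pim_class (m:ℤ) r j' hm0 hr1 hr2, hsv, hfee]
        omega
  · -- the magic condition
    intro u v huv
    obtain ⟨i, hi1, hi2, he⟩ := (mem_cycleEdges (p * m) _).mp huv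
    have hi2' : i ≤ (2 * (k0:ℤ) + 1) * (m:ℤ) := by rw [← hN]; exact hi2
    obtain ⟨hp1, hp2⟩ := pim_range (m:ℤ) i hm0
    have hbase : s(pim (m:ℤ) i, nxt (m:ℤ) (pim (m:ℤ) i)) ∈ cycleEdges m :=
      (mem_cycleEdges m _).mpr ⟨pim (m:ℤ) i, hp1, hp2, rfl⟩
    have hmagic := hf2 (pim (m:ℤ) i) (nxt (m:ℤ) (pim (m:ℤ) i)) hbase
    have hgeval : (∑ i_1 ∈ Finset.Icc (1:ℤ) ((p * m : ℕ) : ℤ),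
        if s(i, nxt ((p * m : ℕ) : ℤ) i) = s(i_1, nxt ((p * m : ℕ) : ℤ) i_1) then
          (fe s(pim (m:ℤ) i_1, nxt (m:ℤ) (pim (m:ℤ) i_1)) + 2 * (m:ℤ) * sv (k0:ℤ) (m:ℤ) i_1)
        else 0)
        = fe s(pim (m:ℤ) i, nxt (m:ℤ) (pim (m:ℤ) i)) + 2 * (m:ℤ) * sv (k0:ℤ) (m:ℤ) i :=
      ge_eval ((p * m : ℕ) : ℤ) hN3 _ i hi1 hi2
    have hTnext : T (k0:ℤ) (m:ℤ) (nxt ((p * m : ℕ) : ℤ) i) = U (k0:ℤ) (m:ℤ) i := by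
      have := T_next (k0:ℤ) (m:ℤ) i hk hmZ hi1 hi2'
      unfold Stmt18Aux.nxt
      rw [hN]
      exact this
    have hpnext : pim (m:ℤ) (nxt ((p * m : ℕ) : ℤ) i) = nxt (m:ℤ) (pim (m:ℤ) i) := by
      rw [hN]
      exact pim_next (2 * (k0:ℤ) + 1) (m:ℤ) i (by omega) hmZ hi1 hi2'
    have hTUsv := TUsv (k0:ℤ) (m:ℤ) i
    rcases Sym2.eq_iff.mp he with ⟨hu, hv⟩ | ⟨hu, hv⟩ <;> rw [hu, hv]
    · simp only [hgeval, hTnext, hpnext]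
      linear_combination hmagic + 2 * (m:ℤ) * hTUsv - 3 * (m:ℤ) * hpZ
    · rw [show s(nxt ((p * m : ℕ) : ℤ) i, i) = s(i, nxt ((p * m : ℕ) : ℤ) i) from Sym2.eq_swap]
      simp only [hgeval, hTnext, hpnext]
      linear_combination hmagic + 2 * (m:ℤ) * hTUsv - 3 * (m:ℤ) * hpZ
end
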